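/- Let δ > 0, c > 0, and let l_j : ℝ² → [0,∞), j = 1,…,n, be measurable with Σ_j ∫_{|y'|<δ} e^{-2τ l_j(y')} dy' ≥ c₀ τ^{-2} for τ ≥ 1. Then for 4/3 < p < 2 and τ large, (Σ_j ∫_{|y'|<δ} e^{-pτ l_j} dy')^{2/p} · τ^{2(p−1)/p} / (τ · Σ_j ∫_{|y'|<δ} e^{-2τ l_j} dy') ≤ C τ^{1−2/p}, ignoring exponentially small corrections; i.e., ‖curl H₀‖²_{L^p(D)} / ‖curl H₀‖²_{L²(D)} ≤ C τ^{1−2/p} for τ ≫ 1 when ∂D is Lipschitz. -/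

import Mathlib

open MeasureTheory

/-- Ratio estimate for the `L^p` versus `L²` norms of `curl H₀` in terms of the
boundary parametrizations `l_j`: if the main term satisfies the polynomial lower
bound `Σ_j ∫_{|y'|<δ} e^{-2τ l_j} ≥ c₀ τ⁻²`, then for `4/3 < p < 2` and `τ` large,
`(Σ_j ∫ e^{-pτ l_j})^{2/p} τ^{2(p−1)/p} / (τ Σ_j ∫ e^{-2τ l_j}) ≤ C τ^{1−2/p}`. -/
theorem stmt18
    (n : ℕ) (δ c₀ : ℝ) (hδ : 0 < δ) (hc₀ : 0 < c₀)
    (l : Fin n → EuclideanSpace ℝ (Fin 2) → ℝ)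
    (hlmeas : ∀ j, Measurable (l j))
    (hlnonneg : ∀ j y, 0 ≤ l j y)
    (hmain : ∀ τ : ℝ, 1 ≤ τ →
      c₀ * τ ^ (-2 : ℤ) ≤
        ∑ j, ∫ y in {y : EuclideanSpace ℝ (Fin 2) | ‖y‖ < δ},
          Real.exp (-2 * τ * l j y))
    (p : ℝ) (hp1 : 4 / 3 < p) (hp2 : p < 2) :
    ∃ C τ₀ : ℝ, 0 < C ∧ 1 ≤ τ₀ ∧
      ∀ τ : ℝ, τ₀ ≤ τ →
        ((∑ j, ∫ y in {y : EuclideanSpace ℝ (Fin 2) | ‖y‖ < δ},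
            Real.exp (-p * τ * l j y)) ^ (2 / p) * τ ^ (2 * (p - 1) / p)) /
          (τ * ∑ j, ∫ y in {y : EuclideanSpace ℝ (Fin 2) | ‖y‖ < δ},
            Real.exp (-2 * τ * l j y)) ≤
          C * τ ^ (1 - 2 / p) := by
  have hp0 : (0:ℝ) < p := lt_trans (by norm_num) hp1
  set S : Set (EuclideanSpace ℝ (Fin 2)) := {y | ‖y‖ < δ} with hSdef
  have hSball : S = Metric.ball 0 δ := by
    ext y; simp [hSdef, mem_ball_zero_iff]
  have hSfin : volume S < ⊤ := by
    rw [hSball]; exact measure_ball_lt_top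
  haveI : Fact (volume S < ⊤) := ⟨hSfin⟩
  set m : ℝ := (volume S).toReal with hm
  have hm0 : 0 ≤ m := ENNReal.toReal_nonneg
  set K0 : ℝ := ((n : ℝ) * m ^ ((2 - p) / 2)) ^ (2 / p) with hK0
  have hK0nn : 0 ≤ K0 := Real.rpow_nonneg (by positivity) _
  refine ⟨K0 + 1, 1, by linarith, le_refl 1, ?_⟩
  intro τ hτ
  have hτ0 : (0:ℝ) < τ := lt_of_lt_of_le one_pos hτ
  set A : ℝ := ∑ j, ∫ y in S, Real.exp (-p * τ * l j y) with hA
  set B : ℝ := ∑ j, ∫ y in S, Real.exp (-2 * τ * l j y) with hB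
  have hJnn : ∀ j : Fin n, 0 ≤ ∫ y in S, Real.exp (-2 * τ * l j y) := fun j =>
    integral_nonneg fun y => (Real.exp_pos _).le
  have hBpos : 0 < B := lt_of_lt_of_le (by positivity) (hmain τ hτ)
  -- Hölder per j
  have hpq : Real.HolderConjugate (2 / p) (2 / (2 - p)) := by
    rw [Real.holderConjugate_iff]
    constructor
    · rw [lt_div_iff₀ hp0]; linarith
    · field_simp; ring
  have hstep : ∀ j : Fin n,
      (∫ y in S, Real.exp (-p * τ * l j y)) ≤
        (∫ y in S, Real.exp (-2 * τ * l j y)) ^ (p / 2) * m ^ ((2 - p) / 2) := by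
    intro j
    have hmeas : Measurable fun y => Real.exp (-p * τ * l j y) :=
      Real.measurable_exp.comp (((hlmeas j).const_mul (-p * τ)))
    have hf : MemLp (fun y => Real.exp (-p * τ * l j y)) (ENNReal.ofReal (2 / p))
        (volume.restrict S) := by
      refine MemLp.of_bound hmeas.aestronglyMeasurable 1 ?_
      filter_upwards with y
      rw [Real.norm_eq_abs, abs_of_pos (Real.exp_pos _)]
      rw [Real.exp_le_one_iff]
      nlinarith [mul_nonneg (mul_nonneg hp0.le hτ0.le) (hlnonneg j y)]
    have hg : MemLp (fun _ : EuclideanSpace ℝ (Fin 2) => (1:ℝ))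
        (ENNReal.ofReal (2 / (2 - p))) (volume.restrict S) := memLp_const 1
    have h := integral_mul_le_Lp_mul_Lq_of_nonneg hpq
      (f := fun y => Real.exp (-p * τ * l j y)) (g := fun _ => (1:ℝ))
      (Filter.Eventually.of_forall fun y => (Real.exp_pos _).le)
      (Filter.Eventually.of_forall fun y => zero_le_one) hf hg
    simp only [mul_one, Real.one_rpow] at h
    have h1 : (∫ y in S, Real.exp (-p * τ * l j y) ^ (2 / p))
        = ∫ y in S, Real.exp (-2 * τ * l j y) := by
      refine integral_congr_ae (Filter.Eventually.of_forall fun y => ?_)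
      dsimp only
      rw [← Real.exp_mul]
      congr 1
      field_simp
    have h2 : (∫ (_ : EuclideanSpace ℝ (Fin 2)) in S, (1:ℝ)) = m := by
      simp [hm, Measure.restrict_apply_univ, Measure.real]
    rw [h1, h2, one_div_div, one_div_div] at h
    exact h
  have hAnn : 0 ≤ A :=
    Finset.sum_nonneg fun j _ => integral_nonneg fun y => (Real.exp_pos _).le
  have hAle : A ≤ (n : ℝ) * m ^ ((2 - p) / 2) * B ^ (p / 2) := by
    calc A ≤ ∑ j : Fin n, (∫ y in S, Real.exp (-2 * τ * l j y)) ^ (p / 2) * m ^ ((2 - p) / 2) :=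
          Finset.sum_le_sum fun j _ => hstep j
    _ ≤ ∑ _j : Fin n, B ^ (p / 2) * m ^ ((2 - p) / 2) := by
        refine Finset.sum_le_sum fun j _ => ?_
        have hle : (∫ y in S, Real.exp (-2 * τ * l j y)) ≤ B :=
          Finset.single_le_sum (fun i _ => hJnn i) (Finset.mem_univ j)
        exact mul_le_mul_of_nonneg_right
          (Real.rpow_le_rpow (hJnn j) hle (by positivity)) (by positivity)
    _ = (n : ℝ) * m ^ ((2 - p) / 2) * B ^ (p / 2) := by
        rw [Finset.sum_const, Finset.card_univ, Fintype.card_fin]; push_cast; ring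
  have hA2p : A ^ (2 / p) ≤ K0 * B := by
    calc A ^ (2 / p) ≤ ((n : ℝ) * m ^ ((2 - p) / 2) * B ^ (p / 2)) ^ (2 / p) :=
          Real.rpow_le_rpow hAnn hAle (by positivity)
    _ = K0 * (B ^ (p / 2)) ^ (2 / p) := Real.mul_rpow (by positivity) (by positivity)
    _ = K0 * B := by
        rw [← Real.rpow_mul hBpos.le]
        congr 1
        rw [div_mul_div_comm]
        rw [show p * 2 / (2 * p) = 1 by field_simp, Real.rpow_one]
  -- final computation
  rw [div_le_iff₀ (by positivity)]
  have hτexp : (K0 + 1) * τ ^ (1 - 2 / p) * (τ * B) =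
      ((K0 + 1) * B) * τ ^ (2 * (p - 1) / p) := by
    have : τ ^ (2 * (p - 1) / p) = τ ^ (1 - 2 / p) * τ := by
      rw [show 2 * (p - 1) / p = (1 - 2 / p) + 1 by field_simp; ring,
        Real.rpow_add hτ0, Real.rpow_one]
    rw [this]; ring
  rw [hτexp]
  have : A ^ (2 / p) ≤ (K0 + 1) * B := le_trans hA2p
    (by nlinarith)
  exact mul_le_mul_of_nonneg_right this (Real.rpow_nonneg hτ0.le _)
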